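/- The peeling process is confluent: if a hypergraph can be reduced to the empty hypergraph by some sequence of peeling steps, then every maximal sequence of peeling steps reduces it to the empty hypergraph. In particular, peelability does not depend on the order in which degree-≤1 vertices are removed. -/

import Mathlib

/-- A finite hypergraph: a finite vertex set and a multiset of edges (finite vertex sets). -/
structure FinHypergraph (α : Type*) [DecidableEq α] where
  V : Finset α
  E : Multiset (Finset α)

variable {α : Type*} [DecidableEq α]

/-- Degree of a vertex: the number of edges containing it (with multiplicity). -/
def FinHypergraph.degree (H : FinHypergraph α) (v : α) : ℕ :=
  (H.E.filter (fun s => v ∈ s)).card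

/-- A peeling step: remove a vertex of degree at most 1 together with its incident edge
(if any). -/
def PeelStep (H H' : FinHypergraph α) : Prop :=
  ∃ v ∈ H.V, H.degree v ≤ 1 ∧ H'.V = H.V.erase v ∧ H'.E = H.E.filter (fun s => v ∉ s)

/-- A hypergraph is peelable if iterating peeling steps empties it. -/
inductive Peelable : FinHypergraph α → Prop
  | empty (H : FinHypergraph α) (hV : H.V = ∅) : Peelable H
  | step (H H' : FinHypergraph α) (hs : PeelStep H H') (hp : Peelable H') : Peelable H

theorem FinHypergraph.ext' {A B : FinHypergraph α} (h1 : A.V = B.V) (h2 : A.E = B.E) : A = B := by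
  cases A; cases B; simp_all

theorem peelable_of_step {H H'' : FinHypergraph α} (hp : Peelable H) (hs : PeelStep H H'') :
    Peelable H'' := by
  induction hp generalizing H'' with
  | empty H hV =>
    obtain ⟨v, hv, _⟩ := hs
    simp [hV] at hv
  | step H H₁ hs1 hp1 ih =>
    obtain ⟨v, hv, hdv, hV1, hE1⟩ := hs1
    obtain ⟨w, hw, hdw, hV2, hE2⟩ := hs
    by_cases hvw : v = w
    · subst hvw
      have : H'' = H₁ := FinHypergraph.ext' (by rw [hV1, hV2]) (by rw [hE1, hE2])
      rw [this]; exact hp1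
    · -- diamond: peel w from H₁ and v from H'' both give H₃
      set H₃ : FinHypergraph α :=
        ⟨(H.V.erase v).erase w, (H.E.filter (fun s => v ∉ s)).filter (fun s => w ∉ s)⟩
      have step13 : PeelStep H₁ H₃ := by
        refine ⟨w, ?_, ?_, by rw [hV1], by rw [hE1]⟩
        · rw [hV1]; exact Finset.mem_erase.mpr ⟨fun h => hvw (h ▸ rfl), hw⟩
        · calc H₁.degree w = ((H.E.filter (fun s => v ∉ s)).filter (fun s => w ∈ s)).card := by
                rw [FinHypergraph.degree, hE1]
            _ ≤ (H.E.filter (fun s => w ∈ s)).card := by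
                rw [Multiset.filter_comm]
                exact Multiset.card_le_card (Multiset.filter_le _ _)
            _ ≤ 1 := hdw
      have step23 : PeelStep H'' H₃ := by
        refine ⟨v, ?_, ?_, ?_, ?_⟩
        · rw [hV2]; exact Finset.mem_erase.mpr ⟨hvw, hv⟩
        · calc H''.degree v = ((H.E.filter (fun s => w ∉ s)).filter (fun s => v ∈ s)).card := by
                rw [FinHypergraph.degree, hE2]
            _ ≤ (H.E.filter (fun s => v ∈ s)).card := by
                rw [Multiset.filter_comm]
                exact Multiset.card_le_card (Multiset.filter_le _ _)
            _ ≤ 1 := hdv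
        · show (H.V.erase v).erase w = H''.V.erase v
          rw [hV2, Finset.erase_right_comm]
        · show (H.E.filter (fun s => v ∉ s)).filter (fun s => w ∉ s)
              = H''.E.filter (fun s => v ∉ s)
          rw [hE2, Multiset.filter_comm]
      exact Peelable.step H'' H₃ step23 (ih step13)

/-- Confluence of peeling: if a hypergraph is peelable, then every maximal sequence of
peeling steps (ending at a hypergraph with no vertex of degree ≤ 1) reaches the empty
hypergraph; peelability does not depend on the order of removals. -/
theorem peeling_confluent {α : Type*} [DecidableEq α] (H H' : FinHypergraph α)
    (hp : Peelable H) (hsteps : Relation.ReflTransGen PeelStep H H')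
    (hmax : ¬ ∃ v ∈ H'.V, H'.degree v ≤ 1) :
    H'.V = ∅ := by
  have hp' : Peelable H' := by
    clear hmax
    induction hsteps with
    | refl => exact hp
    | tail _ hstep ih => exact peelable_of_step ih hstep
  cases hp' with
  | empty _ hV => exact hV
  | step _ H₂ hs _ =>
    obtain ⟨v, hv, hd, _⟩ := hs
    exact absurd ⟨v, hv, hd⟩ hmax
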